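/- Annealed statistical stability (abstract form): in the setting of Theorem 2, suppose ‖h_{ω,ε} − h_ω‖_w ≤ D(|ε|^ζ + dist_{C⁰}(σ⁻¹,σ_ε⁻¹)^{αζ}) for ω in a common full-measure set Ω', that |h(φ)| ≤ C‖h‖_w‖φ‖_{C^r} for h ∈ B_w, that ‖P_ε − P₀‖_𝔉 → 0 and dist_{C⁰}(σ⁻¹,σ_ε⁻¹) → 0 as ε → 0, that R := sup_ε sup_{‖f‖_𝔉 ≤ 1} |∫ f dP_ε| < ∞, and that Φ : Ω×M → ℝ is such that ω ↦ h_ω(Φ(ω,·)) and ω ↦ ‖Φ(ω,·)‖_{C^r} belong to 𝔉. Then ∫ Φ dμ_ε → ∫ Φ dμ₀ as ε → 0, where μ_ε(A×B) = ∫_A h_{ω,ε}(B) dP_ε(ω). -/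

import Mathlib

open MeasureTheory Filter Topology

/-- annealed statistical stability (abstract form of Theorem 2):
∫ Φ dμ_ε → ∫ Φ dμ₀ as ε → 0 (within I), where
∫ Φ dμ_ε = ∫_Ω h_{ω,ε}(Φ(ω,·)) dP_ε(ω). -/
theorem stmt12 {Ω F Bw : Type*} [MeasurableSpace Ω]
    [NormedAddCommGroup Bw] [NormedSpace ℝ Bw]
    [NormedAddCommGroup F] [NormedSpace ℝ F]
    (I : Set ℝ) (hI : (0 : ℝ) ∈ I)
    (P : ℝ → Measure Ω) (hP : ∀ ε ∈ I, IsProbabilityMeasure (P ε))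
    -- the pairing: elements of B_w act as distributions of order r on observables
    (B : Bw →L[ℝ] F →L[ℝ] ℝ) (Cb : ℝ)
    (hB : ∀ (g : Bw) (φ : F), |B g φ| ≤ Cb * ‖g‖ * ‖φ‖)
    (h : ℝ → Ω → Bw) (Ω' : Set Ω)
    (hΩ' : ∀ ε ∈ I, P ε Ω'ᶜ = 0)
    -- the seminorm of the space 𝔉 and the uniform bound R
    (N : (Ω → ℝ) → ℝ) (hNnn : ∀ f, 0 ≤ N f) (R : ℝ)
    (hR : ∀ ε ∈ I, ∀ f : Ω → ℝ, Integrable f (P ε) → |∫ ω, f ω ∂P ε| ≤ R * N f)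
    -- statistical stability of ε ↦ P_ε:  ‖P_ε − P₀‖_𝔉 ≤ η ε → 0
    (η : ℝ → ℝ)
    (hη : ∀ ε ∈ I, ∀ f : Ω → ℝ, Integrable f (P ε) → Integrable f (P 0) →
      |∫ ω, f ω ∂P ε - ∫ ω, f ω ∂P 0| ≤ η ε * N f)
    (hηlim : Tendsto η (𝓝[I] 0) (𝓝 0))
    -- dist_{C⁰}(σ⁻¹, σ_ε⁻¹) ≤ δC0 ε → 0
    (δC0 : ℝ → ℝ) (hδnn : ∀ ε, 0 ≤ δC0 ε) (hδlim : Tendsto δC0 (𝓝[I] 0) (𝓝 0))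
    -- quenched statistical stability (conclusion of Theorem 1)
    (D α ζ : ℝ) (hD : 0 < D) (hα : 0 < α) (hα1 : α ≤ 1) (hζ : 0 < ζ) (hζ1 : ζ ≤ 1)
    (hq : ∀ ε ∈ I, ∀ ω ∈ Ω', ‖h ε ω - h 0 ω‖ ≤ D * (|ε| ^ ζ + δC0 ε ^ (α * ζ)))
    -- the observable Φ, with θ = ‖Φ(ω,·)‖_{C^r} and φ = h_ω(Φ(ω,·)) in 𝔉
    (Φ : Ω → F)
    (hInt : ∀ ε ∈ I, Integrable (fun ω => ‖Φ ω‖) (P ε) ∧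
      Integrable (fun ω => B (h ε ω) (Φ ω)) (P ε) ∧
      Integrable (fun ω => B (h 0 ω) (Φ ω)) (P ε)) :
    Tendsto (fun ε => ∫ ω, B (h ε ω) (Φ ω) ∂P ε) (𝓝[I] 0)
      (𝓝 (∫ ω, B (h 0 ω) (Φ ω) ∂P 0)) := by

  classical
  set g : Ω → ℝ := fun ω => B (h 0 ω) (Φ ω) with hgdef
  set L : ℝ := ∫ ω, g ω ∂P 0 with hLdef
  set NΦ : ℝ := N (fun ω => ‖Φ ω‖) with hNΦdef
  set Cb' : ℝ := max Cb 0 with hCb'def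
  set R' : ℝ := max R 0 with hR'def
  have hCb'nn : (0:ℝ) ≤ Cb' := le_max_right _ _
  have hR'nn : (0:ℝ) ≤ R' := le_max_right _ _
  set T : ℝ → ℝ := fun ε => D * (|ε| ^ ζ + δC0 ε ^ (α * ζ)) with hTdef
  have hTnn : ∀ ε, 0 ≤ T ε := fun ε =>
    mul_nonneg hD.le (add_nonneg (Real.rpow_nonneg (abs_nonneg _) _)
      (Real.rpow_nonneg (hδnn _) _))
  -- bound on ∫‖Φ‖ dPε
  have hΦbound : ∀ ε ∈ I, ∫ ω, ‖Φ ω‖ ∂P ε ≤ R' * NΦ := by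
    intro ε hε
    have h1 := hR ε hε _ (hInt ε hε).1
    calc ∫ ω, ‖Φ ω‖ ∂P ε ≤ |∫ ω, ‖Φ ω‖ ∂P ε| := le_abs_self _
      _ ≤ R * NΦ := h1
      _ ≤ R' * NΦ := mul_le_mul_of_nonneg_right (le_max_left _ _) (hNnn _)
  -- main pointwise-in-ε bound
  have key : ∀ ε ∈ I,
      |(∫ ω, B (h ε ω) (Φ ω) ∂P ε) - L| ≤
        Cb' * T ε * (R' * NΦ) + max (η ε) 0 * N g := by
    intro ε hε
    obtain ⟨hi1, hi2, hi3⟩ := hInt ε hε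
    have hae : ∀ᵐ ω ∂P ε, ω ∈ Ω' := by
      rw [MeasureTheory.ae_iff]
      exact hΩ' ε hε
    have step1 : |(∫ ω, B (h ε ω) (Φ ω) ∂P ε) - ∫ ω, g ω ∂P ε|
        ≤ Cb' * T ε * (R' * NΦ) := by
      rw [← integral_sub hi2 hi3]
      have h1 : |∫ ω, (B (h ε ω) (Φ ω) - g ω) ∂P ε|
          ≤ ∫ ω, ‖B (h ε ω) (Φ ω) - g ω‖ ∂P ε := by
        simpa [Real.norm_eq_abs] using
          norm_integral_le_integral_norm (fun ω => B (h ε ω) (Φ ω) - g ω) (μ := P ε)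
      have h2 : ∫ ω, ‖B (h ε ω) (Φ ω) - g ω‖ ∂P ε
          ≤ ∫ ω, Cb' * T ε * ‖Φ ω‖ ∂P ε := by
        refine integral_mono_ae (hi2.sub hi3).norm (hi1.const_mul _) ?_
        filter_upwards [hae] with ω hω
        have heq : B (h ε ω) (Φ ω) - g ω = B (h ε ω - h 0 ω) (Φ ω) := by
          simp [hgdef, map_sub]
        rw [heq, Real.norm_eq_abs]
        calc |B (h ε ω - h 0 ω) (Φ ω)| ≤ Cb * ‖h ε ω - h 0 ω‖ * ‖Φ ω‖ := hB _ _
          _ ≤ Cb' * ‖h ε ω - h 0 ω‖ * ‖Φ ω‖ :=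
            mul_le_mul_of_nonneg_right
              (mul_le_mul_of_nonneg_right (le_max_left _ _) (norm_nonneg _))
              (norm_nonneg _)
          _ ≤ Cb' * T ε * ‖Φ ω‖ :=
            mul_le_mul_of_nonneg_right
              (mul_le_mul_of_nonneg_left (hq ε hε ω hω) hCb'nn) (norm_nonneg _)
      have h3 : ∫ ω, Cb' * T ε * ‖Φ ω‖ ∂P ε = Cb' * T ε * ∫ ω, ‖Φ ω‖ ∂P ε := by
        rw [MeasureTheory.integral_const_mul]
      calc |∫ ω, (B (h ε ω) (Φ ω) - g ω) ∂P ε|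
          ≤ ∫ ω, Cb' * T ε * ‖Φ ω‖ ∂P ε := h1.trans h2
        _ = Cb' * T ε * ∫ ω, ‖Φ ω‖ ∂P ε := h3
        _ ≤ Cb' * T ε * (R' * NΦ) :=
            mul_le_mul_of_nonneg_left (hΦbound ε hε) (mul_nonneg hCb'nn (hTnn ε))
    have step2 : |(∫ ω, g ω ∂P ε) - L| ≤ max (η ε) 0 * N g := by
      have := hη ε hε g hi3 (hInt 0 hI).2.2
      exact this.trans (mul_le_mul_of_nonneg_right (le_max_left _ _) (hNnn _))
    calc |(∫ ω, B (h ε ω) (Φ ω) ∂P ε) - L|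
        = |((∫ ω, B (h ε ω) (Φ ω) ∂P ε) - ∫ ω, g ω ∂P ε) + ((∫ ω, g ω ∂P ε) - L)| := by
          ring_nf
      _ ≤ |(∫ ω, B (h ε ω) (Φ ω) ∂P ε) - ∫ ω, g ω ∂P ε| + |(∫ ω, g ω ∂P ε) - L| :=
          abs_add_le _ _
      _ ≤ Cb' * T ε * (R' * NΦ) + max (η ε) 0 * N g := add_le_add step1 step2
  -- the bound tends to 0
  have habs : Tendsto (fun ε : ℝ => |ε| ^ ζ) (𝓝[I] 0) (𝓝 0) := by
    have h1 : Tendsto (fun ε : ℝ => |ε|) (𝓝[I] 0) (𝓝 0) :=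
      (continuous_abs.tendsto' 0 0 abs_zero).mono_left nhdsWithin_le_nhds
    have h2 : ContinuousAt (fun x : ℝ => x ^ ζ) 0 :=
      Real.continuousAt_rpow_const 0 ζ (Or.inr hζ.le)
    have := h2.tendsto.comp h1
    simpa [Real.zero_rpow hζ.ne', Function.comp_def] using this
  have hδpow : Tendsto (fun ε : ℝ => δC0 ε ^ (α * ζ)) (𝓝[I] 0) (𝓝 0) := by
    have h2 : ContinuousAt (fun x : ℝ => x ^ (α * ζ)) 0 :=
      Real.continuousAt_rpow_const 0 _ (Or.inr (mul_pos hα hζ).le)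
    have := h2.tendsto.comp hδlim
    simpa [Real.zero_rpow (mul_pos hα hζ).ne', Function.comp_def] using this
  have hmax : Tendsto (fun ε => max (η ε) 0) (𝓝[I] 0) (𝓝 0) := by
    simpa using hηlim.max (tendsto_const_nhds (x := (0:ℝ)))
  have hb : Tendsto (fun ε => Cb' * T ε * (R' * NΦ) + max (η ε) 0 * N g)
      (𝓝[I] 0) (𝓝 0) := by
    have hT0 : Tendsto T (𝓝[I] 0) (𝓝 0) := by
      simpa using (habs.add hδpow).const_mul D
    have h1 : Tendsto (fun ε => Cb' * T ε * (R' * NΦ)) (𝓝[I] 0) (𝓝 0) := by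
      simpa using (hT0.const_mul Cb').mul_const (R' * NΦ)
    simpa using h1.add (hmax.mul_const (N g))
  rw [tendsto_iff_norm_sub_tendsto_zero]
  refine squeeze_zero_norm' ?_ hb
  filter_upwards [self_mem_nhdsWithin] with ε hε
  simpa [Real.norm_eq_abs, abs_abs] using key ε hε
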